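/- For every integer k ≥ 0 and every r ∈ ℤ/nℤ, one has τ_k^{(r)}(x_1,…,x_m) = Σ_{i≥0} (−1)^i · h_{k−in}^{(r)}(x_1,…,x_m) · e_i(p_1,…,p_m), where p_j = ∏_{s∈ℤ/nℤ} x_j^{(s)} and e_i denotes the classical i-th elementary symmetric polynomial in m arguments (so e_i = 0 for i > m); the sum is finite since h with negative subscript vanishes. -/

import Mathlib

noncomputable section
open Finset MvPolynomial

open Classical in
/-- Loop complete homogeneous symmetric function `h_k^{(s)}(x_1, …, x_m)`; zero for `k < 0`. -/
def lH (n m : ℕ) (k : ℤ) (s : ZMod n) : MvPolynomial (Fin m × ZMod n) ℤ :=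
  if 0 ≤ k then
    ∑ f ∈ Finset.univ.filter (fun f : Fin k.toNat → Fin m => Monotone f),
      ∏ j : Fin k.toNat, MvPolynomial.X (f j, s - ((j : ℕ) : ZMod n))
  else 0

open Classical in
/-- `τ_k^{(s)}(x_a, …, x_b)` (1-indexed window `a ≤ i ≤ b`): the sum over weakly increasing
sequences `a ≤ i_1 ≤ ⋯ ≤ i_k ≤ b` in which no value occurs more than `n - 1` times of
`x_{i_1}^{(s)} x_{i_2}^{(s-1)} ⋯ x_{i_k}^{(s-k+1)}`; zero for `k < 0`. -/
def lT (n m a b : ℕ) (k : ℤ) (s : ZMod n) : MvPolynomial (Fin m × ZMod n) ℤ :=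
  if 0 ≤ k then
    ∑ f ∈ Finset.univ.filter (fun f : Fin k.toNat → Fin m =>
        Monotone f ∧ (∀ j, a ≤ (f j : ℕ) + 1 ∧ (f j : ℕ) + 1 ≤ b) ∧
        ∀ v : Fin m, (Finset.univ.filter (fun j => f j = v)).card ≤ n - 1),
      ∏ j : Fin k.toNat, MvPolynomial.X (f j, s - ((j : ℕ) : ZMod n))
  else 0

open Classical in
/-- The classical elementary symmetric polynomial `e_i(p_1, …, p_m)` evaluated at the
color products `p_j = ∏_{s ∈ ℤ/nℤ} x_j^{(s)}`. -/
def eP (n m i : ℕ) : MvPolynomial (Fin m × ZMod n) ℤ :=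
  ∑ g ∈ Finset.univ.filter (fun g : Fin i → Fin m => StrictMono g),
    ∏ j : Fin i, ∏ s ∈ Finset.range n, MvPolynomial.X (g j, (s : ZMod n))


namespace TauAux

variable {n m : ℕ}

/-- Multiplicity vectors summing to `k`. -/
def comps (m k : ℕ) : Finset (Fin m → ℕ) :=
  (Fintype.piFinset fun _ : Fin m => Finset.range (k+1)).filter fun c => ∑ v, c v = k

/-- Multiplicity vector of a function. -/
def multf {m k : ℕ} (f : Fin k → Fin m) : Fin m → ℕ :=
  fun v => (Finset.univ.filter fun j => f j = v).card

lemma multf_sum {k : ℕ} (f : Fin k → Fin m) : ∑ v, multf f v = k := by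
  have := Finset.card_eq_sum_card_fiberwise (f := f) (s := Finset.univ) (t := Finset.univ)
    (fun x _ => mem_univ _)
  simpa [multf] using this.symm

lemma multf_mem_comps {k : ℕ} (f : Fin k → Fin m) : multf f ∈ comps m k := by
  refine Finset.mem_filter.2 ⟨Fintype.mem_piFinset.2 fun v => ?_, multf_sum f⟩
  simp only [Finset.mem_range]
  have : multf f v ≤ (Finset.univ : Finset (Fin k)).card := Finset.card_filter_le _ _
  simp only [Finset.card_univ, Fintype.card_fin] at this
  omega

lemma sum_le_of_mem_comps {k : ℕ} {c : Fin m → ℕ} (hc : c ∈ comps m k) (s : Finset (Fin m)) :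
    ∑ v ∈ s, c v ≤ k := by
  have h2 := (Finset.mem_filter.1 hc).2
  calc ∑ v ∈ s, c v ≤ ∑ v, c v := Finset.sum_le_sum_of_subset (Finset.subset_univ s)
  _ = k := h2

/-- Sorted list with multiplicities `c`. -/
def listOf (c : Fin m → ℕ) : List (Fin m) :=
  Multiset.sort (∑ v : Fin m, Multiset.replicate (c v) v) (· ≤ ·)

lemma length_listOf (c : Fin m → ℕ) : (listOf c).length = ∑ v, c v := by
  simp [listOf, Multiset.length_sort]

lemma sorted_listOf (c : Fin m → ℕ) : (listOf c).Pairwise (· ≤ ·) :=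
  Multiset.pairwise_sort _ _

lemma count_listOf (c : Fin m → ℕ) (v : Fin m) :
    Multiset.count v ↑(listOf c) = c v := by
  rw [listOf, Multiset.sort_eq, Multiset.count_sum']
  rw [Finset.sum_eq_single v (fun w _ hw => by
    simp only [Multiset.count_replicate]
    exact if_neg hw) (by simp)]
  simp [Multiset.count_replicate]

/-- Monotone function with multiplicities `c` (when `(listOf c).length = k`). -/
def gc (hm : 0 < m) (k : ℕ) (c : Fin m → ℕ) : Fin k → Fin m :=
  fun j => (listOf c).getD (j : ℕ) ⟨0, hm⟩

lemma gc_monotone (hm : 0 < m) {k : ℕ} {c : Fin m → ℕ} (hc : (listOf c).length = k) :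
    Monotone (gc hm k c) := by
  intro j1 j2 h
  rcases eq_or_lt_of_le h with h' | h'
  · exact le_of_eq (by rw [h'])
  · have h1 : (j1 : ℕ) < (listOf c).length := hc ▸ j1.2
    have h2 : (j2 : ℕ) < (listOf c).length := hc ▸ j2.2
    simp only [gc]
    rw [List.getD_eq_getElem _ _ h1, List.getD_eq_getElem _ _ h2]
    have := List.SortedLE.monotone_get (sorted_listOf c).sortedLE (a := ⟨(j1:ℕ), h1⟩) (b := ⟨(j2:ℕ), h2⟩)
      (by simpa using h)
    simpa [List.get_eq_getElem] using this

lemma ofFn_gc (hm : 0 < m) {k : ℕ} {c : Fin m → ℕ} (hc : (listOf c).length = k) :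
    List.ofFn (gc hm k c) = listOf c := by
  apply List.ext_get (by simp [hc])
  intro i h1 h2
  simp only [List.get_ofFn]
  simp only [gc]
  rw [List.getD_eq_getElem _ _ (by simpa using h2)]
  simp

lemma multf_eq_count {k : ℕ} (f : Fin k → Fin m) (v : Fin m) :
    multf f v = Multiset.count v (Multiset.map f Finset.univ.val) := by
  rw [Multiset.count_map]
  have : Multiset.filter (fun a => v = f a) Finset.univ.val
       = Multiset.filter (fun j => f j = v) Finset.univ.val :=
    Multiset.filter_congr (fun a _ => eq_comm)
  rw [this]
  rfl

lemma multf_gc (hm : 0 < m) {k : ℕ} {c : Fin m → ℕ} (hc : (listOf c).length = k) :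
    multf (gc hm k c) = c := by
  funext v
  rw [multf_eq_count, Fin.univ_val_map, ofFn_gc hm hc, count_listOf]

lemma mono_cut {k : ℕ} {f : Fin k → Fin m} (hf : Monotone f) (q : Fin m → Prop)
    [DecidablePred q] (hq : ∀ a b : Fin m, a ≤ b → q b → q a) (j : Fin k) :
    q (f j) ↔ (j : ℕ) < (Finset.univ.filter fun j' => q (f j')).card := by
  constructor
  · intro h
    have hsub : Finset.Iic j ⊆ Finset.univ.filter fun j' => q (f j') := by
      intro j' hj'
      simp only [Finset.mem_Iic] at hj'
      simp only [Finset.mem_filter, Finset.mem_univ, true_and]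
      exact hq _ _ (hf hj') h
    have := Finset.card_le_card hsub
    rw [Fin.card_Iic] at this
    omega
  · intro h
    by_contra hq'
    have hsub : (Finset.univ.filter fun j' => q (f j')) ⊆ Finset.Iio j := by
      intro j' hj'
      simp only [Finset.mem_filter, Finset.mem_univ, true_and] at hj'
      simp only [Finset.mem_Iio]
      by_contra hlt
      exact hq' (hq _ _ (hf (not_lt.1 hlt)) hj')
    have := Finset.card_le_card hsub
    rw [Fin.card_Iio] at this
    omega

lemma card_cut {k : ℕ} (f : Fin k → Fin m) (q : Fin m → Prop) [DecidablePred q] :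
    (Finset.univ.filter fun j => q (f j)).card = ∑ w ∈ Finset.univ.filter q, multf f w := by
  rw [Finset.card_eq_sum_card_fiberwise (f := f) (t := Finset.univ.filter q)
    (fun j hj => by simp_all)]
  refine Finset.sum_congr rfl fun w hw => ?_
  simp only [Finset.mem_filter, Finset.mem_univ, true_and] at hw
  congr 1
  rw [Finset.filter_filter]
  apply Finset.filter_congr
  intro j _
  constructor
  · exact fun h => h.2
  · exact fun h => ⟨h ▸ hw, h⟩

lemma mono_inj {k : ℕ} {f g : Fin k → Fin m} (hf : Monotone f) (hg : Monotone g)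
    (h : multf f = multf g) : f = g := by
  classical
  have key : ∀ j v, (f j < v ↔ g j < v) := by
    intro j v
    rw [mono_cut hf (· < v) (fun a b hab hb => lt_of_le_of_lt hab hb) j,
        mono_cut hg (· < v) (fun a b hab hb => lt_of_le_of_lt hab hb) j,
        card_cut f (· < v), card_cut g (· < v), h]
  funext j
  have h1 : ¬ f j < g j := by rw [key j (g j)]; exact lt_irrefl _
  have h2 : ¬ g j < f j := by rw [← key j (f j)]; exact lt_irrefl _
  exact le_antisymm (not_lt.1 h2) (not_lt.1 h1)

def Sc {m : ℕ} (c : Fin m → ℕ) (v : Fin m) : ℕ := ∑ w ∈ Finset.Iio v, c w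

noncomputable def Mc (n : ℕ) {m : ℕ} (c : Fin m → ℕ) (r : ZMod n) : MvPolynomial (Fin m × ZMod n) ℤ :=
  ∏ v : Fin m, ∏ t ∈ Finset.range (c v),
    MvPolynomial.X (v, r - (((Sc c v + t : ℕ) : ZMod n)))

lemma filter_lt_eq_Iio (v : Fin m) : (Finset.univ.filter fun w => w < v) = Finset.Iio v := by
  ext w; simp

lemma filter_le_eq_Iic (v : Fin m) : (Finset.univ.filter fun w => w ≤ v) = Finset.Iic v := by
  ext w; simp

lemma mono_fiber_mem {k : ℕ} {f : Fin k → Fin m} (hf : Monotone f) (j : Fin k) (v : Fin m) :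
    f j = v ↔ Sc (multf f) v ≤ (j : ℕ) ∧ (j : ℕ) < Sc (multf f) v + multf f v := by
  have hlt : ((j:ℕ) < (Finset.univ.filter fun j' => f j' < v).card) ↔ f j < v :=
    (mono_cut hf (· < v) (fun a b hab hb => lt_of_le_of_lt hab hb) j).symm
  have hle : ((j:ℕ) < (Finset.univ.filter fun j' => f j' ≤ v).card) ↔ f j ≤ v :=
    (mono_cut hf (· ≤ v) (fun a b hab hb => le_trans hab hb) j).symm
  have c1 : (Finset.univ.filter fun j' => f j' < v).card = Sc (multf f) v := by
    rw [card_cut f (· < v), Sc, filter_lt_eq_Iio]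
  have c2 : (Finset.univ.filter fun j' => f j' ≤ v).card = Sc (multf f) v + multf f v := by
    rw [card_cut f (· ≤ v), filter_le_eq_Iic, ← Finset.Iio_insert,
      Finset.sum_insert (by simp), Sc, add_comm]
  rw [c1] at hlt; rw [c2] at hle
  constructor
  · intro h
    refine ⟨not_lt.1 ?_, hle.2 (le_of_eq h)⟩
    rw [hlt]; exact fun hc => absurd h (ne_of_gt hc).symm
  · intro ⟨ha, hb⟩
    have : f j ≤ v := hle.1 hb
    rcases lt_or_eq_of_le this with hc | hc
    · exact absurd (hlt.2 hc) (not_lt.2 ha)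
    · exact hc

lemma Sc_add_multf_le {k : ℕ} (f : Fin k → Fin m) (v : Fin m) :
    Sc (multf f) v + multf f v ≤ k := by
  have : (Finset.univ.filter fun j' => f j' ≤ v).card = Sc (multf f) v + multf f v := by
    rw [card_cut f (· ≤ v), filter_le_eq_Iic, ← Finset.Iio_insert,
      Finset.sum_insert (by simp), Sc, add_comm]
  rw [← this]
  have := Finset.card_filter_le (Finset.univ : Finset (Fin k)) (fun j' => f j' ≤ v)
  simpa using this

lemma prod_eq_Mc {k : ℕ} {f : Fin k → Fin m} (hf : Monotone f) (r : ZMod n) :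
    (∏ j : Fin k, MvPolynomial.X (R := ℤ) (f j, r - ((j : ℕ) : ZMod n)))
      = Mc n (multf f) r := by
  rw [← Finset.prod_fiberwise_of_maps_to (t := Finset.univ) (g := f) (fun j _ => mem_univ _)
    (fun j => MvPolynomial.X (R := ℤ) (f j, r - ((j : ℕ) : ZMod n)))]
  refine Finset.prod_congr rfl fun v _ => ?_
  have hbound : ∀ t ∈ Finset.range (multf f v), Sc (multf f) v + t < k := by
    intro t ht
    simp only [Finset.mem_range] at ht
    have := Sc_add_multf_le f v
    omega
  refine (Finset.prod_bij (s := Finset.range (multf f v))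
    (t := Finset.univ.filter fun j => f j = v)
    (fun t ht => (⟨Sc (multf f) v + t, hbound t ht⟩ : Fin k)) ?_ ?_ ?_ ?_).symm
  · intro t ht
    simp only [Finset.mem_range] at ht
    simp only [Finset.mem_filter, Finset.mem_univ, true_and]
    exact (mono_fiber_mem hf _ v).2 ⟨by simp, by simp; omega⟩
  · intro t1 h1 t2 h2 he
    simpa using he
  · intro j hj
    simp only [Finset.mem_filter, Finset.mem_univ, true_and] at hj
    obtain ⟨ha, hb⟩ := (mono_fiber_mem hf j v).1 hj
    refine ⟨(j : ℕ) - Sc (multf f) v, Finset.mem_range.2 (by omega), ?_⟩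
    apply Fin.ext
    simp only []
    omega
  · intro t ht
    have hv : f (⟨Sc (multf f) v + t, hbound t ht⟩ : Fin k) = v := by
      simp only [Finset.mem_range] at ht
      exact (mono_fiber_mem hf _ v).2 ⟨by simp, by simp; omega⟩
    rw [hv]

open Classical in
lemma sum_mono_eq (hm : 0 < m) (k : ℕ) (r : ZMod n) (p : (Fin m → ℕ) → Prop) :
    ∑ f ∈ Finset.univ.filter (fun f : Fin k → Fin m => Monotone f ∧ p (multf f)),
        ∏ j : Fin k, MvPolynomial.X (R := ℤ) (f j, r - ((j : ℕ) : ZMod n))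
      = ∑ c ∈ (comps m k).filter p, Mc n c r := by
  have hlen : ∀ c ∈ (comps m k).filter p, (listOf c).length = k := by
    intro c hc
    rw [length_listOf]
    exact (Finset.mem_filter.1 (Finset.mem_filter.1 hc).1).2
  refine Finset.sum_nbij' (fun f => multf f) (fun c => gc hm k c) ?_ ?_ ?_ ?_ ?_
  · intro f hf
    simp only [Finset.mem_filter, Finset.mem_univ, true_and] at hf
    exact Finset.mem_filter.2 ⟨multf_mem_comps f, hf.2⟩
  · intro c hc
    simp only [Finset.mem_filter, Finset.mem_univ, true_and]
    refine ⟨gc_monotone hm (hlen c hc), ?_⟩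
    rw [multf_gc hm (hlen c hc)]
    exact (Finset.mem_filter.1 hc).2
  · intro f hf
    simp only [Finset.mem_filter, Finset.mem_univ, true_and] at hf
    have hl : (listOf (multf f)).length = k := by rw [length_listOf, multf_sum]
    exact mono_inj (gc_monotone hm hl) hf.1 (multf_gc hm hl)
  · intro c hc
    exact multf_gc hm (hlen c hc)
  · intro f hf
    simp only [Finset.mem_filter, Finset.mem_univ, true_and] at hf
    exact prod_eq_Mc hf.1 r

lemma natCast_range_prod (hn : 0 < n) [NeZero n] {M : Type*} [CommMonoid M] (G : ZMod n → M) :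
    ∏ t ∈ Finset.range n, G ((t : ℕ) : ZMod n) = ∏ u : ZMod n, G u := by
  refine Finset.prod_nbij' (fun t => ((t : ℕ) : ZMod n)) (fun u => ZMod.val u)
    (fun t _ => Finset.mem_univ _) (fun u _ => Finset.mem_range.2 (ZMod.val_lt u))
    ?_ ?_ ?_
  · intro t ht
    exact ZMod.val_cast_of_lt (Finset.mem_range.1 ht)
  · intro u _
    exact ZMod.natCast_rightInverse u
  · intro t _
    rfl

def PP (n : ℕ) {m : ℕ} (S : Finset (Fin m)) : MvPolynomial (Fin m × ZMod n) ℤ :=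
  ∏ v ∈ S, ∏ t ∈ Finset.range n, MvPolynomial.X (v, ((t : ℕ) : ZMod n))

open Classical in
lemma eP_eq (hn : 0 < n) (i : ℕ) :
    eP n m i = ∑ S ∈ Finset.powersetCard i (Finset.univ : Finset (Fin m)), PP n S := by
  rw [eP]
  refine Finset.sum_bij (fun g _ => Finset.image g Finset.univ) ?_ ?_ ?_ ?_
  · intro g hg
    simp only [Finset.mem_filter, Finset.mem_univ, true_and] at hg
    refine Finset.mem_powersetCard.2 ⟨Finset.subset_univ _, ?_⟩
    rw [Finset.card_image_of_injective _ hg.injective]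
    simp
  · intro g1 h1 g2 h2 he
    simp only [Finset.mem_filter, Finset.mem_univ, true_and] at h1 h2
    have hc1 : (Finset.image g1 Finset.univ).card = i := by
      rw [Finset.card_image_of_injective _ h1.injective]; simp
    have e1 := Finset.orderEmbOfFin_unique hc1 (f := g1)
      (fun x => Finset.mem_image_of_mem _ (Finset.mem_univ x)) h1
    have himg : Finset.image g1 Finset.univ = Finset.image g2 Finset.univ := he
    have e2 := Finset.orderEmbOfFin_unique (s := Finset.image g1 Finset.univ) hc1 (f := g2)
      (fun x => himg ▸ Finset.mem_image_of_mem _ (Finset.mem_univ x)) h2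
    rw [e1, e2]
  · intro S hS
    obtain ⟨hsub, hcard⟩ := Finset.mem_powersetCard.1 hS
    refine ⟨⇑(S.orderEmbOfFin hcard), ?_, ?_⟩
    · simp only [Finset.mem_filter, Finset.mem_univ, true_and]
      exact (S.orderEmbOfFin hcard).strictMono
    · apply Finset.coe_injective
      rw [Finset.coe_image, Finset.coe_univ, Set.image_univ, Finset.range_orderEmbOfFin]
  · intro g hg
    simp only [Finset.mem_filter, Finset.mem_univ, true_and] at hg
    rw [PP, Finset.prod_image (fun a _ b _ h => hg.injective h)]

def addS {m : ℕ} (n : ℕ) (c : Fin m → ℕ) (S : Finset (Fin m)) : Fin m → ℕ :=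
  fun v => c v + if v ∈ S then n else 0

lemma Sc_addS_cast (c : Fin m → ℕ) (S : Finset (Fin m)) (v : Fin m) :
    ((Sc (addS n c S) v : ℕ) : ZMod n) = ((Sc c v : ℕ) : ZMod n) := by
  have : Sc (addS n c S) v = Sc c v + n * (Finset.Iio v ∩ S).card := by
    simp only [Sc, addS]
    rw [Finset.sum_add_distrib]
    congr 1
    rw [Finset.sum_ite_mem]
    rw [Finset.sum_const]
    ring
  rw [this]
  push_cast
  rw [ZMod.natCast_self]
  ring

lemma mem_comps {k : ℕ} {c : Fin m → ℕ} : c ∈ comps m k ↔ ∑ v, c v = k := by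
  constructor
  · exact fun h => (Finset.mem_filter.1 h).2
  · intro h
    refine Finset.mem_filter.2 ⟨Fintype.mem_piFinset.2 fun v => ?_, h⟩
    simp only [Finset.mem_range]
    have : c v ≤ ∑ w, c w := Finset.single_le_sum (fun w _ => Nat.zero_le _) (Finset.mem_univ v)
    omega

lemma Mc_addS (hn : 0 < n) (c : Fin m → ℕ) (S : Finset (Fin m)) (r : ZMod n) :
    Mc n (addS n c S) r = Mc n c r * PP n S := by
  classical
  haveI : NeZero n := ⟨hn.ne'⟩
  rw [Mc, Mc, PP]
  have hPP : (∏ v ∈ S, ∏ t ∈ Finset.range n, MvPolynomial.X (R := ℤ) (v, ((t : ℕ) : ZMod n)))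
      = ∏ v : Fin m, if v ∈ S then ∏ t ∈ Finset.range n,
          MvPolynomial.X (R := ℤ) (v, ((t : ℕ) : ZMod n)) else 1 := by
    rw [Finset.prod_ite_mem, Finset.univ_inter]
  rw [hPP, ← Finset.prod_mul_distrib]
  refine Finset.prod_congr rfl fun v _ => ?_
  by_cases hv : v ∈ S
  · rw [if_pos hv]
    have hadd : addS n c S v = c v + n := by simp [addS, hv]
    rw [hadd, Finset.prod_range_add]
    congr 1
    · refine Finset.prod_congr rfl fun t _ => ?_
      congr 2
      push_cast
      rw [show (((Sc (addS n c S) v : ℕ) : ZMod n)) = ((Sc c v : ℕ) : ZMod n) from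
        Sc_addS_cast c S v]
    · have key : ∀ A : ZMod n, (∏ t ∈ Finset.range n,
          MvPolynomial.X (R := ℤ) (v, A - ((t : ℕ) : ZMod n)))
          = ∏ t ∈ Finset.range n, MvPolynomial.X (R := ℤ) (v, ((t : ℕ) : ZMod n)) := by
        intro A
        rw [natCast_range_prod hn (fun u => MvPolynomial.X (v, A - u)),
            natCast_range_prod hn (fun u => MvPolynomial.X (v, u))]
        exact Fintype.prod_bijective (fun u => A - u) (Equiv.subLeft A).bijective _ _
          (fun u => rfl)
      rw [← key (r - ((Sc (addS n c S) v + c v : ℕ) : ZMod n))]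
      refine Finset.prod_congr rfl fun t _ => ?_
      congr 2
      push_cast
      ring
  · rw [if_neg hv, mul_one]
    have hadd : addS n c S v = c v := by simp [addS, hv]
    rw [hadd]
    refine Finset.prod_congr rfl fun t _ => ?_
    congr 2
    push_cast
    rw [show (((Sc (addS n c S) v : ℕ) : ZMod n)) = ((Sc c v : ℕ) : ZMod n) from
      Sc_addS_cast c S v]

open Classical in
lemma lH_eq (hm : 0 < m) (k : ℕ) (r : ZMod n) :
    lH n m (k : ℤ) r = ∑ c ∈ comps m k, Mc n c r := by
  rw [lH, if_pos (Int.natCast_nonneg k)]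
  have h := sum_mono_eq (n := n) hm k r (fun _ => True)
  simp only [and_true, Finset.filter_true] at h
  simp only [Int.toNat_natCast]
  convert h using 2

open Classical in
lemma lT_eq (hn : 1 < n) (hm : 0 < m) (k : ℕ) (r : ZMod n) :
    lT n m 1 m (k : ℤ) r
      = ∑ c ∈ (comps m k).filter (fun c => ∀ v, c v ≤ n - 1), Mc n c r := by
  rw [lT, if_pos (Int.natCast_nonneg k)]
  simp only [Int.toNat_natCast]
  refine Eq.trans ?_ (Eq.trans (sum_mono_eq (n := n) hm k r (fun c => ∀ v, c v ≤ n - 1)) ?_)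
  swap
  · refine Finset.sum_congr ?_ (fun _ _ => rfl)
    ext c
    simp [Finset.mem_filter]
  refine Finset.sum_congr ?_ (fun _ _ => rfl)
  ext f
  simp only [Finset.mem_filter, Finset.mem_univ, true_and]
  simp only [multf]
  constructor
  · rintro ⟨h1, _, h3⟩
    exact ⟨h1, h3⟩
  · rintro ⟨h1, h3⟩
    exact ⟨h1, fun j => ⟨Nat.le_add_left _ _, by have := (f j).2; omega⟩, h3⟩

lemma sum_ite_S (S : Finset (Fin m)) :
    ∑ v : Fin m, (if v ∈ S then n else 0) = n * S.card := by
  rw [Finset.sum_ite_mem, Finset.univ_inter, Finset.sum_const]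
  ring

open Classical in
lemma stepB (hn : 1 < n) (hm : 0 < m) (k : ℕ) (r : ZMod n) (S : Finset (Fin m)) :
    lH n m ((k : ℤ) - S.card * n) r * PP n S
      = ∑ c ∈ (comps m k).filter (fun c => ∀ v ∈ S, n ≤ c v), Mc n c r := by
  by_cases hle : S.card * n ≤ k
  · have hcast : ((k : ℤ) - S.card * n) = ((k - S.card * n : ℕ) : ℤ) := by push_cast; omega
    rw [hcast, lH_eq hm, Finset.sum_mul]
    refine Finset.sum_nbij' (fun c' => addS n c' S)
      (fun c => fun v => c v - if v ∈ S then n else 0) ?_ ?_ ?_ ?_ ?_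
    · intro c' hc'
      have hsum := mem_comps.1 hc'
      refine Finset.mem_filter.2 ⟨mem_comps.2 ?_, ?_⟩
      · simp only [addS]
        rw [Finset.sum_add_distrib, hsum, sum_ite_S]
        have : S.card * n = n * S.card := Nat.mul_comm _ _
        omega
      · intro v hv
        simp [addS, hv]
    · intro c hc
      have hsum := mem_comps.1 (Finset.mem_filter.1 hc).1
      have hS := (Finset.mem_filter.1 hc).2
      apply mem_comps.2
      have : ∀ v, (c v - if v ∈ S then n else 0) + (if v ∈ S then n else 0) = c v := by
        intro v
        by_cases hv : v ∈ S
        · have := hS v hv; simp [hv]; omega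
        · simp [hv]
      have h2 : (∑ v, (c v - if v ∈ S then n else 0)) + ∑ v : Fin m, (if v ∈ S then n else 0)
          = ∑ v, c v := by
        rw [← Finset.sum_add_distrib]
        exact Finset.sum_congr rfl fun v _ => this v
      have h4 := sum_ite_S (n := n) S
      have h5 : S.card * n = n * S.card := Nat.mul_comm _ _
      beta_reduce
      omega
    · intro c' _
      funext v
      by_cases hv : v ∈ S
      · simp only [addS, if_pos hv]
        omega
      · simp only [addS, if_neg hv]
        omega
    · intro c hc
      have hS := (Finset.mem_filter.1 hc).2
      funext v
      by_cases hv : v ∈ S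
      · have := hS v hv; simp only [addS, if_pos hv]; omega
      · simp [addS, hv]
    · intro c' _
      exact (Mc_addS (by omega) c' S r).symm
  · have hneg : ((k : ℤ) - S.card * n) < 0 := by push_cast; omega
    rw [lH, if_neg (not_le.2 hneg), zero_mul]
    rw [Finset.filter_eq_empty_iff.2, Finset.sum_empty]
    intro c hc
    intro hall
    have hsum := mem_comps.1 hc
    have : ∑ v ∈ S, n ≤ ∑ v ∈ S, c v := Finset.sum_le_sum hall
    rw [Finset.sum_const, smul_eq_mul] at this
    have h2 : ∑ v ∈ S, c v ≤ k := hsum ▸ Finset.sum_le_sum_of_subset (Finset.subset_univ S)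
    omega


lemma sum_pow_neg_one {α : Type*} [DecidableEq α] {R : Type*} [CommRing R] (x : Finset α) :
    (∑ S ∈ x.powerset, (-1 : R) ^ S.card) = if x = ∅ then 1 else 0 := by
  have h := Finset.sum_powerset_neg_one_pow_card (x := x)
  have h2 : ((∑ S ∈ x.powerset, (-1 : ℤ) ^ S.card : ℤ) : R)
      = ∑ S ∈ x.powerset, (-1 : R) ^ S.card := by
    push_cast
    rfl
  rw [← h2, h]
  split <;> simp

open Classical in
lemma inner_empty (hn : 1 < n) {k : ℕ} {S : Finset (Fin m)} (hbig : k < S.card) :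
    (comps m k).filter (fun c => ∀ v ∈ S, n ≤ c v) = ∅ := by
  rw [Finset.filter_eq_empty_iff]
  intro c hc hall
  have hsum := mem_comps.1 hc
  have h1 : ∑ v ∈ S, n ≤ ∑ v ∈ S, c v := Finset.sum_le_sum hall
  rw [Finset.sum_const, smul_eq_mul] at h1
  have h2 : ∑ v ∈ S, c v ≤ k := hsum ▸ Finset.sum_le_sum_of_subset (Finset.subset_univ S)
  have h3 : S.card ≤ S.card * n := Nat.le_mul_of_pos_right _ (by omega)
  omega

open Classical in
lemma assemble (hn : 1 < n) (hm : 0 < m) (k : ℕ) (r : ZMod n) :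
    ∑ i ∈ Finset.range (k + 1),
        (-1 : MvPolynomial (Fin m × ZMod n) ℤ) ^ i *
          lH n m ((k : ℤ) - i * n) r * eP n m i
      = ∑ c ∈ (comps m k).filter (fun c => ∀ v, c v ≤ n - 1), Mc n c r := by
  calc
    ∑ i ∈ Finset.range (k + 1),
        (-1 : MvPolynomial (Fin m × ZMod n) ℤ) ^ i *
          lH n m ((k : ℤ) - i * n) r * eP n m i
      = ∑ i ∈ Finset.range (k + 1), ∑ S ∈ Finset.powersetCard i (Finset.univ : Finset (Fin m)),
          ((-1 : MvPolynomial (Fin m × ZMod n) ℤ) ^ S.card *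
            ∑ c ∈ (comps m k).filter (fun c => ∀ v ∈ S, n ≤ c v), Mc n c r) := by
        refine Finset.sum_congr rfl fun i _ => ?_
        rw [eP_eq (show 0 < n by omega), Finset.mul_sum]
        refine Finset.sum_congr rfl fun S hS => ?_
        have hc := (Finset.mem_powersetCard.1 hS).2
        rw [← stepB hn hm k r S, hc]
        ring
    _ = ∑ i ∈ Finset.range (k + m + 2), ∑ S ∈ Finset.powersetCard i (Finset.univ : Finset (Fin m)),
          ((-1 : MvPolynomial (Fin m × ZMod n) ℤ) ^ S.card *
            ∑ c ∈ (comps m k).filter (fun c => ∀ v ∈ S, n ≤ c v), Mc n c r) := by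
        refine Finset.sum_subset (Finset.range_subset_range.2 (by omega)) ?_
        intro i _ hi
        have hk : k < i := by
          simp only [Finset.mem_range] at hi
          omega
        refine Finset.sum_eq_zero fun S hS => ?_
        have hc := (Finset.mem_powersetCard.1 hS).2
        rw [inner_empty hn (show k < S.card by omega), Finset.sum_empty, mul_zero]
    _ = ∑ i ∈ Finset.range (m + 1), ∑ S ∈ Finset.powersetCard i (Finset.univ : Finset (Fin m)),
          ((-1 : MvPolynomial (Fin m × ZMod n) ℤ) ^ S.card *
            ∑ c ∈ (comps m k).filter (fun c => ∀ v ∈ S, n ≤ c v), Mc n c r) := by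
        refine (Finset.sum_subset (Finset.range_subset_range.2 (by omega)) ?_).symm
        intro i _ hi
        have hk : m < i := by
          simp only [Finset.mem_range] at hi
          omega
        rw [Finset.powersetCard_eq_empty.2 (by simp [hk]), Finset.sum_empty]
    _ = ∑ S ∈ (Finset.univ : Finset (Fin m)).powerset,
          ((-1 : MvPolynomial (Fin m × ZMod n) ℤ) ^ S.card *
            ∑ c ∈ (comps m k).filter (fun c => ∀ v ∈ S, n ≤ c v), Mc n c r) := by
        rw [Finset.sum_powerset, Finset.card_univ, Fintype.card_fin]
    _ = ∑ S ∈ (Finset.univ : Finset (Fin m)).powerset, ∑ c ∈ comps m k,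
          (if ∀ v ∈ S, n ≤ c v then
            (-1 : MvPolynomial (Fin m × ZMod n) ℤ) ^ S.card * Mc n c r else 0) := by
        refine Finset.sum_congr rfl fun S _ => ?_
        rw [Finset.mul_sum, Finset.sum_filter]
    _ = ∑ c ∈ comps m k, ∑ S ∈ (Finset.univ : Finset (Fin m)).powerset,
          (if ∀ v ∈ S, n ≤ c v then
            (-1 : MvPolynomial (Fin m × ZMod n) ℤ) ^ S.card * Mc n c r else 0) :=
        Finset.sum_comm
    _ = ∑ c ∈ comps m k,
          (if (Finset.univ.filter fun v => n ≤ c v) = ∅ then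
            (1 : MvPolynomial (Fin m × ZMod n) ℤ) else 0) * Mc n c r := by
        refine Finset.sum_congr rfl fun c _ => ?_
        have h1 : ((Finset.univ : Finset (Fin m)).powerset).filter
              (fun S => ∀ v ∈ S, n ≤ c v)
            = (Finset.univ.filter fun v => n ≤ c v).powerset := by
          ext S
          simp only [Finset.mem_filter, Finset.mem_powerset, Finset.subset_univ, true_and,
            Finset.subset_iff, Finset.mem_univ]
          tauto
        rw [← Finset.sum_filter, h1, ← Finset.sum_mul, sum_pow_neg_one]
    _ = ∑ c ∈ (comps m k).filter (fun c => ∀ v, c v ≤ n - 1), Mc n c r := by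
        simp only [ite_mul, one_mul, zero_mul]
        rw [← Finset.sum_filter]
        refine Finset.sum_congr ?_ fun _ _ => rfl
        ext c
        simp only [Finset.mem_filter, Finset.filter_eq_empty_iff, Finset.mem_univ,
          true_implies, not_le]
        constructor
        · rintro ⟨h1, h2⟩
          exact ⟨h1, fun v => by have := @h2 v; omega⟩
        · rintro ⟨h1, h2⟩
          exact ⟨h1, fun v => by have := @h2 v; omega⟩

end TauAux

open TauAux

/-- `τ_k^{(r)} = Σ_{i≥0} (−1)^i h_{k−in}^{(r)} e_i(p_1, …, p_m)`. -/
theorem tau_eq_alternating_h (n m k : ℕ) (hn : 1 < n) (hm : 1 ≤ m) (r : ZMod n) :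
    lT n m 1 m (k : ℤ) r =
      ∑ i ∈ Finset.range (k + 1),
        (-1 : MvPolynomial (Fin m × ZMod n) ℤ) ^ i *
          lH n m ((k : ℤ) - i * n) r * eP n m i := by
  rw [lT_eq hn hm k r]
  exact (assemble hn hm k r).symm

end
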